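/- The image of GL(2,ℝ) under the homomorphism L equals ℝ⁺ · O⁺(2,1): a 3×3 real matrix M equals L(g) for some g ∈ GL(2,ℝ) if and only if M = c·M′ for some real c > 0 and some 3×3 real matrix M′ satisfying η(M′u) = η(u) for all u ∈ ℝ³ and M′₃₃ > 0 (i.e., M′ belongs to the orthochronous Lorentz group O⁺(2,1)). Moreover L(λI) = λ⁻² I for every λ ≠ 0, so L(ℝ×·I) = ℝ⁺·I. -/

import Mathlib

open Matrix

noncomputable def phi (u : Fin 3 → ℝ) : Matrix (Fin 2) (Fin 2) ℝ :=
  !![u 2 + u 0, u 1; u 1, u 2 - u 0]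

noncomputable def phiInv (σ : Matrix (Fin 2) (Fin 2) ℝ) : Fin 3 → ℝ :=
  ![(σ 0 0 - σ 1 1) / 2, σ 0 1, (σ 0 0 + σ 1 1) / 2]

noncomputable def Lmap (g : Matrix (Fin 2) (Fin 2) ℝ) (u : Fin 3 → ℝ) : Fin 3 → ℝ :=
  phiInv ((g⁻¹)ᵀ * phi u * g⁻¹)

noncomputable def Lmat (g : Matrix (Fin 2) (Fin 2) ℝ) : Matrix (Fin 3) (Fin 3) ℝ :=
  Matrix.of fun i j => Lmap g (Pi.single j 1) i

noncomputable def eta (u : Fin 3 → ℝ) : ℝ := (u 2) ^ 2 - (u 0) ^ 2 - (u 1) ^ 2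

noncomputable def Lmat' (k : Matrix (Fin 2) (Fin 2) ℝ) : Matrix (Fin 3) (Fin 3) ℝ :=
  Matrix.of fun i j => phiInv (kᵀ * phi (Pi.single j 1) * k) i

lemma Lmat_eq_Lmat' (g : Matrix (Fin 2) (Fin 2) ℝ) : Lmat g = Lmat' g⁻¹ := rfl

lemma Lmat'_eq (k : Matrix (Fin 2) (Fin 2) ℝ) :
    Lmat' k = !![(k 0 0^2 - k 0 1^2 - k 1 0^2 + k 1 1^2)/2, k 0 0*k 1 0 - k 0 1*k 1 1, (k 0 0^2 - k 0 1^2 + k 1 0^2 - k 1 1^2)/2;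
                 k 0 0*k 0 1 - k 1 0*k 1 1, k 0 1*k 1 0 + k 0 0*k 1 1, k 0 0*k 0 1 + k 1 0*k 1 1;
                 (k 0 0^2 + k 0 1^2 - k 1 0^2 - k 1 1^2)/2, k 0 0*k 1 0 + k 0 1*k 1 1, (k 0 0^2 + k 0 1^2 + k 1 0^2 + k 1 1^2)/2] := by
  ext i j
  fin_cases i <;> fin_cases j <;>
    simp [Lmat', phiInv, phi, Matrix.mul_apply, Fin.sum_univ_two, Pi.single_apply] <;> ring

lemma Lmat'_mulVec (k : Matrix (Fin 2) (Fin 2) ℝ) (u : Fin 3 → ℝ) :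
    Lmat' k *ᵥ u = phiInv (kᵀ * phi u * k) := by
  funext i
  fin_cases i <;>
    simp [Lmat'_eq, phiInv, phi, Matrix.mulVec, dotProduct, Matrix.mul_apply,
      Fin.sum_univ_three, Fin.sum_univ_two] <;> ring

lemma eta_Lmat' (k : Matrix (Fin 2) (Fin 2) ℝ) (u : Fin 3 → ℝ) :
    eta (Lmat' k *ᵥ u) = (k.det)^2 * eta u := by
  rw [Lmat'_mulVec]
  simp [eta, phiInv, phi, Matrix.mul_apply, Fin.sum_univ_two, Matrix.det_fin_two]
  ring

lemma Lmat'_mul (k m : Matrix (Fin 2) (Fin 2) ℝ) :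
    Lmat' (k * m) = Lmat' m * Lmat' k := by
  ext i j
  fin_cases i <;> fin_cases j <;>
    simp [Lmat'_eq, Matrix.mul_apply, Fin.sum_univ_three, Fin.sum_univ_two] <;> ring

lemma Lmat'_one : Lmat' (1 : Matrix (Fin 2) (Fin 2) ℝ) = 1 := by
  ext i j
  fin_cases i <;> fin_cases j <;>
    simp [Lmat'_eq, Matrix.one_apply, Matrix.vecHead, Matrix.vecTail]

lemma Lmat'_smul_one (l : ℝ) : Lmat' (l • (1 : Matrix (Fin 2) (Fin 2) ℝ)) = l^2 • 1 := by
  ext i j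
  fin_cases i <;> fin_cases j <;>
    simp [Lmat'_eq, Matrix.one_apply, Matrix.vecHead, Matrix.vecTail] <;> ring

lemma eta_smul (c : ℝ) (v : Fin 3 → ℝ) : eta (c • v) = c^2 * eta v := by
  simp [eta]; ring
lemma rot_exists (p s2 : ℝ) (hps : p^2 + s2^2 = 1) :
    ∃ k : Matrix (Fin 2) (Fin 2) ℝ, k.det ≠ 0 ∧
      Lmat' k = !![p, -s2, 0; s2, p, 0; (0:ℝ), 0, 1] := by
  obtain ⟨α, β, hab, hP, hS⟩ : ∃ α β : ℝ, α^2 + β^2 = 1 ∧ α^2 - β^2 = p ∧ 2*(α*β) = -s2 := by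
    by_cases hp : p = -1
    · have hs20 : s2 = 0 := by nlinarith [sq_nonneg s2]
      exact ⟨0, 1, by norm_num, by norm_num [hp], by rw [hs20]; ring⟩
    · have hple : -1 ≤ p := by nlinarith [sq_nonneg s2]
      have hp1 : 0 < 1 + p := by
        rcases lt_of_le_of_ne hple (Ne.symm hp) with h
        linarith
      obtain ⟨α, hα0, hα2⟩ : ∃ α : ℝ, 0 < α ∧ α^2 = (1+p)/2 :=
        ⟨Real.sqrt ((1+p)/2), Real.sqrt_pos.2 (by linarith), Real.sq_sqrt (by linarith)⟩
      have hα0' : α ≠ 0 := ne_of_gt hα0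
      refine ⟨α, -s2/(2*α), ?_, ?_, ?_⟩
      · field_simp
        linear_combination (4*α^2 - 2 + 2*p)*hα2 + hps
      · field_simp
        linear_combination (4*α^2 + 2 - 2*p)*hα2 - hps
      · field_simp
  refine ⟨!![α, -β; β, α], by simp [Matrix.det_fin_two]; nlinarith [hab], ?_⟩
  rw [Lmat'_eq]
  ext i j
  fin_cases i <;> fin_cases j <;>
    simp [Matrix.vecHead, Matrix.vecTail] <;> linarith [hab, hP, hS]

lemma LmatF : Lmat' !![(1:ℝ), 0; 0, -1] = !![(1:ℝ), 0, 0; 0, -1, 0; 0, 0, 1] := by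
  rw [Lmat'_eq]
  norm_num

lemma refl_exists (p s2 : ℝ) (hps : p^2 + s2^2 = 1) :
    ∃ k : Matrix (Fin 2) (Fin 2) ℝ, k.det ≠ 0 ∧
      Lmat' k = !![p, s2, 0; s2, -p, 0; (0:ℝ), 0, 1] := by
  obtain ⟨k, hk, hL⟩ := rot_exists p s2 hps
  refine ⟨!![(1:ℝ), 0; 0, -1] * k, ?_, ?_⟩
  · rw [Matrix.det_mul]
    simp [Matrix.det_fin_two]
    intro h
    exact hk (by simp [Matrix.det_fin_two]; linarith)
  · rw [Lmat'_mul, hL, LmatF]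
    ext i j
    fin_cases i <;> fin_cases j <;>
      simp [Matrix.mul_apply, Fin.sum_univ_three, Matrix.vecHead, Matrix.vecTail]

lemma reverse (c : ℝ) (M' : Matrix (Fin 3) (Fin 3) ℝ) (hc : 0 < c)
    (hη : ∀ u : Fin 3 → ℝ, eta (M' *ᵥ u) = eta u) (hpos : 0 < M' 2 2) :
    ∃ g : Matrix (Fin 2) (Fin 2) ℝ, IsUnit g ∧ c • M' = Lmat g := by
  obtain ⟨a, b, τ, ha, hb, hτ⟩ :
      ∃ a b τ : ℝ, M' 0 2 = a ∧ M' 1 2 = b ∧ M' 2 2 = τ := ⟨_, _, _, rfl, rfl, rfl⟩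
  have hτ0 : 0 < τ := hτ ▸ hpos
  have hcol : τ^2 - a^2 - b^2 = 1 := by
    have h := hη ![0,0,1]
    simp [eta, Matrix.mulVec, dotProduct, Fin.sum_univ_three, ha, hb, hτ] at h
    linarith
  obtain ⟨s, hs2, hs0⟩ : ∃ s : ℝ, s^2 = 2*τ+2 ∧ s ≠ 0 :=
    ⟨Real.sqrt (2*τ+2), Real.sq_sqrt (by linarith), by positivity⟩
  set h : Matrix (Fin 2) (Fin 2) ℝ := !![(τ-a+1)/s, -b/s; -b/s, (τ+a+1)/s] with hh_def
  have hdeth : h.det = 1 := by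
    rw [Matrix.det_fin_two]
    simp [hh_def]
    field_simp
    linear_combination hcol - hs2
  have hvec : Lmat' h *ᵥ ![a,b,τ] = ![0,0,1] := by
    rw [Lmat'_mulVec]
    funext i
    fin_cases i
    · simp [phiInv, phi, hh_def, Matrix.mul_apply, Matrix.transpose_apply, Fin.sum_univ_two,
        Matrix.vecHead, Matrix.vecTail]
      field_simp
      linear_combination (-2*a) * hcol
    · simp [phiInv, phi, hh_def, Matrix.mul_apply, Matrix.transpose_apply, Fin.sum_univ_two,
        Matrix.vecHead, Matrix.vecTail]
      field_simp
      linear_combination (-b) * hcol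
    · simp [phiInv, phi, hh_def, Matrix.mul_apply, Matrix.transpose_apply, Fin.sum_univ_two,
        Matrix.vecHead, Matrix.vecTail]
      field_simp
      linear_combination (2*(τ+2))*hcol - 2*hs2
  have hMcol : M' *ᵥ ![0,0,1] = ![a,b,τ] := by
    funext i
    fin_cases i <;> simp [Matrix.mulVec, dotProduct, Fin.sum_univ_three, ha, hb, hτ]
  set N : Matrix (Fin 3) (Fin 3) ℝ := Lmat' h * M' with hN_def
  have hNcol : N *ᵥ ![0,0,1] = ![0,0,1] := by
    rw [hN_def, ← Matrix.mulVec_mulVec, hMcol, hvec]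
  have eN02 : N 0 2 = 0 := by
    have := congrFun hNcol 0
    simpa [Matrix.mulVec, dotProduct, Fin.sum_univ_three] using this
  have eN12 : N 1 2 = 0 := by
    have := congrFun hNcol 1
    simpa [Matrix.mulVec, dotProduct, Fin.sum_univ_three] using this
  have eN22 : N 2 2 = 1 := by
    have := congrFun hNcol 2
    simpa [Matrix.mulVec, dotProduct, Fin.sum_univ_three] using this
  have hNη : ∀ u : Fin 3 → ℝ, eta (N *ᵥ u) = eta u := by
    intro u
    rw [hN_def, ← Matrix.mulVec_mulVec, eta_Lmat', hdeth, hη u]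
    ring
  have r1 := hNη ![1,0,0]
  have r2 := hNη ![0,1,0]
  have r3 := hNη ![1,1,0]
  have r4 := hNη ![1,0,1]
  have r5 := hNη ![0,1,1]
  simp [eta, Matrix.mulVec, dotProduct, Fin.sum_univ_three, eN02, eN12, eN22]
    at r1 r2 r3 r4 r5
  have hx0 : N 2 0 = 0 := by linear_combination (r4 - r1)/2
  have hx1 : N 2 1 = 0 := by linear_combination (r5 - r2)/2
  have hc0 : N 0 0^2 + N 1 0^2 = 1 := by linear_combination N 2 0 * hx0 - r1
  have hc1 : N 0 1^2 + N 1 1^2 = 1 := by linear_combination N 2 1 * hx1 - r2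
  have hor : N 0 0*N 0 1 + N 1 0*N 1 1 = 0 := by
    linear_combination (-(r3 - r1 - r2))/2 + N 2 1 * hx0
  have he : (N 0 0 * N 1 1 - N 0 1 * N 1 0)^2 = 1 := by
    linear_combination (N 0 1^2 + N 1 1^2) * hc0 + hc1 - (N 0 0*N 0 1 + N 1 0*N 1 1) * hor
  have he' : (N 0 0 * N 1 1 - N 0 1 * N 1 0 - 1) * (N 0 0 * N 1 1 - N 0 1 * N 1 0 + 1) = 0 := by
    linear_combination he
  obtain ⟨k2, hdk2, hk2N⟩ :
      ∃ k2 : Matrix (Fin 2) (Fin 2) ℝ, k2.det ≠ 0 ∧ Lmat' k2 = N := by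
    rcases mul_eq_zero.1 he' with hE | hE
    · have hq : N 0 1 = -N 1 0 := by
        linear_combination (-(N 0 1))*hc0 + N 0 0*hor + (-(N 1 0))*hE
      have hw : N 1 1 = N 0 0 := by
        linear_combination (-(N 1 1))*hc0 + N 1 0*hor + N 0 0*hE
      obtain ⟨k2, hd, hL⟩ := rot_exists (N 0 0) (N 1 0) hc0
      refine ⟨k2, hd, ?_⟩
      rw [hL]
      ext i j
      fin_cases i <;> fin_cases j <;>
        simp [Matrix.vecHead, Matrix.vecTail, eN02, eN12, eN22, hx0, hx1, hq, hw]
    · have hq : N 0 1 = N 1 0 := by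
        linear_combination (-(N 0 1))*hc0 + N 0 0*hor + (-(N 1 0))*hE
      have hw : N 1 1 = -N 0 0 := by
        linear_combination (-(N 1 1))*hc0 + N 1 0*hor + N 0 0*hE
      obtain ⟨k2, hd, hL⟩ := refl_exists (N 0 0) (N 1 0) hc0
      refine ⟨k2, hd, ?_⟩
      rw [hL]
      ext i j
      fin_cases i <;> fin_cases j <;>
        simp [Matrix.vecHead, Matrix.vecTail, eN02, eN12, eN22, hx0, hx1, hq, hw]
  have hdh : IsUnit h.det := by rw [hdeth]; exact isUnit_one
  have hhinv : h * h⁻¹ = 1 := Matrix.mul_nonsing_inv h hdh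
  have hM'eq : M' = Lmat' (k2 * h⁻¹) := by
    rw [Lmat'_mul, hk2N, hN_def, ← Matrix.mul_assoc, ← Lmat'_mul, hhinv, Lmat'_one,
      Matrix.one_mul]
  have hdhinv : (h⁻¹).det = 1 := by
    rw [Matrix.det_nonsing_inv, hdeth]
    simp
  set K : Matrix (Fin 2) (Fin 2) ℝ := Real.sqrt c • (k2 * h⁻¹) with hK_def
  have hLK : Lmat' K = c • M' := by
    have hKeq : K = (k2 * h⁻¹) * (Real.sqrt c • (1 : Matrix (Fin 2) (Fin 2) ℝ)) := by
      rw [Matrix.mul_smul, Matrix.mul_one]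
    rw [hKeq, Lmat'_mul, Lmat'_smul_one, Real.sq_sqrt hc.le, hM'eq, Matrix.smul_mul,
      Matrix.one_mul, ← hM'eq]
  have hdK : K.det = c * k2.det := by
    rw [hK_def, Matrix.det_smul, Matrix.det_mul, hdhinv, mul_one]
    simp [Fintype.card_fin, Real.sq_sqrt hc.le]
  have hdKu : IsUnit K.det := by
    rw [hdK]
    exact isUnit_iff_ne_zero.2 (mul_ne_zero (ne_of_gt hc) hdk2)
  refine ⟨K⁻¹, ?_, ?_⟩
  · refine (Matrix.isUnit_iff_isUnit_det _).2 ?_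
    rw [Matrix.det_nonsing_inv]
    exact isUnit_ringInverse.2 hdKu
  · rw [Lmat_eq_Lmat', Matrix.nonsing_inv_nonsing_inv K hdKu, hLK]

lemma forward (g : Matrix (Fin 2) (Fin 2) ℝ) (hg : IsUnit g) :
    ∃ (c : ℝ) (M' : Matrix (Fin 3) (Fin 3) ℝ), 0 < c ∧
      (∀ u : Fin 3 → ℝ, eta (M' *ᵥ u) = eta u) ∧ 0 < M' 2 2 ∧ Lmat g = c • M' := by
  have hdg : IsUnit g.det := (Matrix.isUnit_iff_isUnit_det g).1 hg
  set k : Matrix (Fin 2) (Fin 2) ℝ := g⁻¹ with hk_def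
  have hdk : k.det ≠ 0 := by
    rw [hk_def, Matrix.det_nonsing_inv]
    exact (isUnit_ringInverse.2 hdg).ne_zero
  set d : ℝ := |k.det| with hd_def
  have hd : 0 < d := abs_pos.2 hdk
  have hd2 : d^2 = k.det^2 := sq_abs _
  refine ⟨d, d⁻¹ • Lmat' k, hd, ?_, ?_, ?_⟩
  · intro u
    rw [Matrix.smul_mulVec, eta_smul, eta_Lmat', ← hd2]
    field_simp
  · have hpos2 : 0 < k 0 0^2 + k 0 1^2 + k 1 0^2 + k 1 1^2 := by
      by_contra hcon
      push_neg at hcon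
      have h00 : k 0 0 = 0 := by
        nlinarith [sq_nonneg (k 0 0), sq_nonneg (k 0 1), sq_nonneg (k 1 0), sq_nonneg (k 1 1)]
      have h01 : k 0 1 = 0 := by
        nlinarith [sq_nonneg (k 0 0), sq_nonneg (k 0 1), sq_nonneg (k 1 0), sq_nonneg (k 1 1)]
      have h10 : k 1 0 = 0 := by
        nlinarith [sq_nonneg (k 0 0), sq_nonneg (k 0 1), sq_nonneg (k 1 0), sq_nonneg (k 1 1)]
      have h11 : k 1 1 = 0 := by
        nlinarith [sq_nonneg (k 0 0), sq_nonneg (k 0 1), sq_nonneg (k 1 0), sq_nonneg (k 1 1)]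
      exact hdk (by rw [Matrix.det_fin_two, h00, h01, h10, h11]; ring)
    have h22 : (Lmat' k) 2 2 = (k 0 0^2 + k 0 1^2 + k 1 0^2 + k 1 1^2)/2 := by
      rw [Lmat'_eq]
      simp [Matrix.vecHead, Matrix.vecTail]
    have : (d⁻¹ • Lmat' k) 2 2 = d⁻¹ * ((k 0 0^2 + k 0 1^2 + k 1 0^2 + k 1 1^2)/2) := by
      rw [Matrix.smul_apply, h22, smul_eq_mul]
    rw [this]
    positivity
  · rw [Lmat_eq_Lmat', ← hk_def, smul_smul, mul_inv_cancel₀ (ne_of_gt hd), one_smul]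

lemma smul_one_inv (l : ℝ) (hl : l ≠ 0) :
    (l • (1 : Matrix (Fin 2) (Fin 2) ℝ))⁻¹ = l⁻¹ • 1 := by
  apply Matrix.inv_eq_right_inv
  rw [smul_mul_smul_comm, mul_inv_cancel₀ hl, one_mul, one_smul]

lemma part2 (l : ℝ) (hl : l ≠ 0) :
    Lmat (l • (1 : Matrix (Fin 2) (Fin 2) ℝ)) = (l⁻¹) ^ 2 • (1 : Matrix (Fin 3) (Fin 3) ℝ) := by
  rw [Lmat_eq_Lmat', smul_one_inv l hl, Lmat'_smul_one]

/-- the image of GL(2,ℝ) under L equals ℝ⁺·O⁺(2,1); moreover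
L(λI) = λ⁻²I for λ ≠ 0, so L(ℝ×·I) = ℝ⁺·I. -/
theorem stmt6 :
    (∀ M : Matrix (Fin 3) (Fin 3) ℝ,
      (∃ g : Matrix (Fin 2) (Fin 2) ℝ, IsUnit g ∧ M = Lmat g) ↔
      (∃ (c : ℝ) (M' : Matrix (Fin 3) (Fin 3) ℝ), 0 < c ∧
        (∀ u : Fin 3 → ℝ, eta (M' *ᵥ u) = eta u) ∧ 0 < M' 2 2 ∧ M = c • M')) ∧
    (∀ l : ℝ, l ≠ 0 →
      Lmat (l • (1 : Matrix (Fin 2) (Fin 2) ℝ)) = (l⁻¹) ^ 2 • (1 : Matrix (Fin 3) (Fin 3) ℝ)) ∧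
    {M : Matrix (Fin 3) (Fin 3) ℝ | ∃ l : ℝ, l ≠ 0 ∧ M = Lmat (l • 1)} =
      {M : Matrix (Fin 3) (Fin 3) ℝ | ∃ c : ℝ, 0 < c ∧ M = c • 1} := by
  refine ⟨?_, part2, ?_⟩
  · intro M
    constructor
    · rintro ⟨g, hg, rfl⟩
      obtain ⟨c, M', hc, h1, h2, h3⟩ := forward g hg
      exact ⟨c, M', hc, h1, h2, h3⟩
    · rintro ⟨c, M', hc, h1, h2, rfl⟩
      obtain ⟨g, hg, hE⟩ := reverse c M' hc h1 h2
      exact ⟨g, hg, hE⟩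
  · ext M
    simp only [Set.mem_setOf_eq]
    constructor
    · rintro ⟨l, hl, rfl⟩
      exact ⟨(l⁻¹)^2, by positivity, part2 l hl⟩
    · rintro ⟨c, hc, rfl⟩
      refine ⟨(Real.sqrt c)⁻¹, by positivity, ?_⟩
      rw [part2 _ (by positivity), inv_inv, Real.sq_sqrt hc.le]
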